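/- Let k be a field, L an additive commutative monoid (in the paper, a ℤ[x]-lattice), and Δ : AddMonoidAlgebra k L → (AddMonoidAlgebra k L) ⊗[k] (AddMonoidAlgebra k L) the comultiplication with Δ(T^u) = T^u ⊗ T^u. Let M be a k-submodule of AddMonoidAlgebra k L such that for every a ∈ M, Δ(a) lies in the image of (AddMonoidAlgebra k L) ⊗[k] M under the canonical map TensorProduct.map id M.subtype. Then M is spanned by the monomial terms it contains: for every a = ∑_{u} α_u T^u ∈ M (a finite sum) and every u ∈ L, the term α_u T^u belongs to M. (Key step in the proofs of Theorem 5.9 and the invariant-subvariety theorem: a subspace invariant under the comodule structure is graded by L.) -/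

import Mathlib

open TensorProduct

/-- Key step in Theorem 5.9: if `M` is a `k`-subspace of the monoid algebra
`AddMonoidAlgebra k L` such that `Δ(M) ⊆ (AddMonoidAlgebra k L) ⊗ M`, where `Δ` is the
comultiplication with `Δ(T^u) = T^u ⊗ T^u`, then `M` is spanned by the monomial terms it
contains: for every `a ∈ M` and `u ∈ L`, the term `(a u) • T^u` belongs to `M`. -/
theorem comodule_submodule_is_graded
    (k : Type*) [Field k] (L : Type*) [AddCommMonoid L]
    (Δ : AddMonoidAlgebra k L →ₗ[k] (AddMonoidAlgebra k L) ⊗[k] (AddMonoidAlgebra k L))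
    (hΔ : ∀ u : L, Δ (AddMonoidAlgebra.single u 1) =
      (AddMonoidAlgebra.single u 1) ⊗ₜ[k] (AddMonoidAlgebra.single u 1))
    (M : Submodule k (AddMonoidAlgebra k L))
    (hM : ∀ a ∈ M, Δ a ∈ LinearMap.range
      (TensorProduct.map (LinearMap.id : AddMonoidAlgebra k L →ₗ[k] AddMonoidAlgebra k L)
        M.subtype)) :
    ∀ a ∈ M, ∀ u : L, (AddMonoidAlgebra.single u (a.coeff u) : AddMonoidAlgebra k L) ∈ M := by
  classical
  intro a ha u
  let ℓ : AddMonoidAlgebra k L →ₗ[k] k :=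
    Finsupp.lapply u ∘ₗ (AddMonoidAlgebra.coeffLinearEquiv k).toLinearMap
  let φ : (AddMonoidAlgebra k L) ⊗[k] (AddMonoidAlgebra k L) →ₗ[k] AddMonoidAlgebra k L :=
    (TensorProduct.lid k (AddMonoidAlgebra k L)).toLinearMap ∘ₗ
      TensorProduct.map ℓ LinearMap.id
  obtain ⟨x, hx⟩ := hM a ha
  have hgen : ∀ x : (AddMonoidAlgebra k L) ⊗[k] M,
      φ (TensorProduct.map LinearMap.id M.subtype x) ∈ M := by
    intro x
    induction x using TensorProduct.induction_on with
    | zero => simp [M.zero_mem]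
    | tmul y m =>
        have : φ (TensorProduct.map LinearMap.id M.subtype (y ⊗ₜ m))
            = (y.coeff u) • (m : AddMonoidAlgebra k L) := by
          simp only [φ, ℓ, TensorProduct.map_tmul, LinearMap.coe_comp, Function.comp_apply,
            LinearMap.id_coe, id_eq, LinearEquiv.coe_coe, TensorProduct.lid_tmul]
          rfl
        rw [this]
        exact M.smul_mem _ m.2
    | add y z hy hz =>
        rw [map_add, map_add]
        exact M.add_mem hy hz
  have hmem : φ (Δ a) ∈ M := hx ▸ hgen x
  have hval : φ (Δ a) = AddMonoidAlgebra.single u (a.coeff u) := by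
    conv_lhs => rw [← AddMonoidAlgebra.sum_coeff_single a]
    rw [map_finsuppSum, map_finsuppSum]
    have key : ∀ v : L, ∀ c : k, φ (Δ (AddMonoidAlgebra.single v c)) =
        if v = u then AddMonoidAlgebra.single u c else 0 := by
      intro v c
      have h1 : (AddMonoidAlgebra.single v c : AddMonoidAlgebra k L) = c • AddMonoidAlgebra.single v 1 := by
        rw [AddMonoidAlgebra.smul_single']; ring_nf
      rw [h1, map_smul, hΔ v, map_smul]
      have h2 : φ ((AddMonoidAlgebra.single v 1) ⊗ₜ[k] (AddMonoidAlgebra.single v 1))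
          = ((AddMonoidAlgebra.single v (1:k)).coeff u) • AddMonoidAlgebra.single v 1 := by
        simp only [φ, ℓ, TensorProduct.map_tmul, LinearMap.coe_comp, Function.comp_apply,
          LinearMap.id_coe, id_eq, LinearEquiv.coe_coe, TensorProduct.lid_tmul]
        rfl
      rw [h2]
      rcases eq_or_ne v u with h | h
      · subst h
        simp [Finsupp.single_apply, AddMonoidAlgebra.smul_single']
      · simp [Finsupp.single_apply, h]
    have heq : (a.coeff.sum fun v c => φ (Δ (AddMonoidAlgebra.single v c)))
        = a.coeff.sum fun v c => if v = u then AddMonoidAlgebra.single u c else 0 := by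
      apply Finsupp.sum_congr
      intro v _
      exact key v (a.coeff v)
    rw [heq, Finsupp.sum_ite_eq' a.coeff u (fun _ c => AddMonoidAlgebra.single u c)]
    split_ifs with h
    · rfl
    · rw [Finsupp.notMem_support_iff.mp h]
      simp
  rwa [hval] at hmem
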